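/- If P is a probability distribution on a finite product space and Q is any probability distribution that factorizes as a product over subsets of the variables and has the same marginals as P on each of those subsets, then the cross entropy −Σ_x P(x) log₂ Q(x) equals the entropy S[Q]. Consequently D_KL[P‖Q] = S[Q] − S[P]. -/

import Mathlib

open Finset

/-- Shannon entropy (base 2). -/
noncomputable def H {α : Type*} [Fintype α] (p : α → ℝ) : ℝ :=
  -∑ x, p x * Real.logb 2 (p x)

/-- Kullback–Leibler divergence (base 2). -/
noncomputable def KL {α : Type*} [Fintype α] (p q : α → ℝ) : ℝ :=
  ∑ x, p x * Real.logb 2 (p x / q x)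

/-- Marginal of `P` on the set of coordinates `A`, as a function of a full
configuration (only its `A`-coordinates matter). -/
noncomputable def margA {M : ℕ} {X : Fin M → Type*} [∀ i, Fintype (X i)]
    [∀ i, DecidableEq (X i)] (P : (∀ i, X i) → ℝ) (A : Finset (Fin M))
    (z : ∀ i, X i) : ℝ :=
  ∑ y, if (∀ i ∈ A, y i = z i) then P y else 0

/-- The number of configurations agreeing with a given one on `A` does not
depend on the given configuration. -/
lemma card_match_const {M : ℕ} {X : Fin M → Type*} [∀ i, Fintype (X i)]
    [∀ i, DecidableEq (X i)] (A : Finset (Fin M)) (y y' : ∀ i, X i) :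
    (univ.filter fun z : ∀ i, X i => ∀ i ∈ A, y i = z i).card =
    (univ.filter fun z : ∀ i, X i => ∀ i ∈ A, y' i = z i).card := by
  apply Finset.card_nbij' (fun z => fun i => if i ∈ A then y' i else z i)
    (fun z => fun i => if i ∈ A then y i else z i)
  · intro z hz
    simp only [mem_coe, mem_filter, mem_univ, true_and] at hz ⊢
    intro i hi; simp [hi]
  · intro z hz
    simp only [mem_coe, mem_filter, mem_univ, true_and] at hz ⊢
    intro i hi; simp [hi]
  · intro z hz
    simp only [mem_coe, mem_filter, mem_univ, true_and] at hz
    funext i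
    by_cases hi : i ∈ A
    · simp [hi, (hz i hi).symm]
    · simp [hi]
  · intro z hz
    simp only [mem_coe, mem_filter, mem_univ, true_and] at hz
    funext i
    by_cases hi : i ∈ A
    · simp [hi, (hz i hi).symm]
    · simp [hi]

/-- If two distributions have the same marginal on `A`, then the expectations
of any function depending only on the `A`-coordinates agree. -/
lemma transfer {M : ℕ} {X : Fin M → Type*} [∀ i, Fintype (X i)]
    [∀ i, DecidableEq (X i)] [Nonempty (∀ i, X i)]
    (P Q : (∀ i, X i) → ℝ) (A : Finset (Fin M))
    (hm : ∀ z, margA Q A z = margA P A z)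
    (g : (∀ i, X i) → ℝ) (hg : ∀ x y, (∀ i ∈ A, x i = y i) → g x = g y) :
    ∑ x, P x * g x = ∑ x, Q x * g x := by
  set y0 : ∀ i, X i := Classical.arbitrary _
  set c : ℕ := (univ.filter fun z : ∀ i, X i => ∀ i ∈ A, y0 i = z i).card with hc
  have hcpos : 0 < c := by
    rw [hc]
    apply Finset.card_pos.2
    exact ⟨y0, by simp⟩
  have key : ∀ R : (∀ i, X i) → ℝ,
      ∑ z, margA R A z * g z = (c : ℝ) * ∑ y, R y * g y := by
    intro R
    have h1 : ∀ z, margA R A z * g z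
        = ∑ y, if (∀ i ∈ A, y i = z i) then R y * g y else 0 := by
      intro z
      rw [margA, Finset.sum_mul]
      refine Finset.sum_congr rfl fun y _ => ?_
      by_cases h : ∀ i ∈ A, y i = z i
      · simp [h, hg y z h]
      · simp [h]
    simp_rw [h1]
    rw [Finset.sum_comm, Finset.mul_sum]
    refine Finset.sum_congr rfl fun y _ => ?_
    rw [← Finset.sum_filter, Finset.sum_const, nsmul_eq_mul,
      card_match_const A y y0]
  have h2 := key P
  have h3 := key Q
  have h4 : ∑ z, margA P A z * g z = ∑ z, margA Q A z * g z := by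
    refine Finset.sum_congr rfl fun z _ => ?_
    rw [hm z]
  rw [h2, h3] at h4
  have hc0 : (c : ℝ) ≠ 0 := by positivity
  exact mul_left_cancel₀ hc0 h4

/-- If `Q` factorizes over subsets `A_1,…,A_r` of the variables and has the same
marginals as `P` on each `A_k`, then the cross entropy `−Σ_x P(x) log₂ Q(x)`
equals `S[Q]`, whence `D_KL[P‖Q] = S[Q] − S[P]`. -/
theorem stmt_3 {M r : ℕ} {X : Fin M → Type*} [∀ i, Fintype (X i)]
    [∀ i, DecidableEq (X i)]
    (P Q : (∀ i, X i) → ℝ)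
    (hP0 : ∀ x, 0 ≤ P x) (hP1 : ∑ x, P x = 1)
    (hQ0 : ∀ x, 0 ≤ Q x) (hQ1 : ∑ x, Q x = 1)
    (A : Fin r → Finset (Fin M)) (f : Fin r → (∀ i, X i) → ℝ)
    (hf0 : ∀ k x, 0 ≤ f k x)
    (hfloc : ∀ k x y, (∀ i ∈ A k, x i = y i) → f k x = f k y)
    (hQprod : ∀ x, Q x = ∏ k, f k x)
    (hac : ∀ x, 0 < P x → 0 < Q x)
    (hmarg : ∀ k z, margA Q (A k) z = margA P (A k) z) :
    (-∑ x, P x * Real.logb 2 (Q x)) = H Q ∧ KL P Q = H Q - H P := by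
  have hne : Nonempty (∀ i, X i) := by
    by_contra h
    rw [not_nonempty_iff] at h
    rw [Finset.univ_eq_empty, Finset.sum_empty] at hP1
    exact one_ne_zero hP1.symm
  -- splitting log Q into sum of log f_k, for any R vanishing where Q = 0
  have split : ∀ R : (∀ i, X i) → ℝ, (∀ x, R x ≠ 0 → 0 < Q x) →
      ∑ x, R x * Real.logb 2 (Q x) = ∑ k, ∑ x, R x * Real.logb 2 (f k x) := by
    intro R hR
    rw [Finset.sum_comm]
    refine Finset.sum_congr rfl fun x _ => ?_
    by_cases hRx : R x = 0
    · simp [hRx]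
    · have hQx : 0 < Q x := hR x hRx
      have hfne : ∀ k ∈ (univ : Finset (Fin r)), f k x ≠ 0 := by
        intro k _ hk0
        rw [hQprod x] at hQx
        have : (∏ k, f k x) = 0 := Finset.prod_eq_zero (Finset.mem_univ k) hk0
        rw [this] at hQx
        exact lt_irrefl 0 hQx
      rw [← Finset.mul_sum, hQprod x, Real.logb, Real.log_prod hfne,
        Finset.sum_div]
      simp [Real.logb]
  have hPQ : ∀ x, P x ≠ 0 → 0 < Q x := fun x hx =>
    hac x (lt_of_le_of_ne (hP0 x) (Ne.symm hx))
  have hQQ : ∀ x, Q x ≠ 0 → 0 < Q x := fun x hx =>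
    lt_of_le_of_ne (hQ0 x) (Ne.symm hx)
  have cross : ∑ x, P x * Real.logb 2 (Q x) = ∑ x, Q x * Real.logb 2 (Q x) := by
    rw [split P hPQ, split Q hQQ]
    refine Finset.sum_congr rfl fun k _ => ?_
    exact transfer P Q (A k) (hmarg k) (fun x => Real.logb 2 (f k x))
      (fun x y h => by rw [hfloc k x y h])
  constructor
  · rw [cross, H]
  · have hKL : KL P Q = ∑ x, P x * Real.logb 2 (P x)
        - ∑ x, P x * Real.logb 2 (Q x) := by
      rw [KL, ← Finset.sum_sub_distrib]
      refine Finset.sum_congr rfl fun x _ => ?_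
      by_cases hPx : P x = 0
      · simp [hPx]
      · have hQx : Q x ≠ 0 := (hPQ x hPx).ne'
        rw [Real.logb_div hPx hQx, mul_sub]
    rw [hKL, cross, H, H]
    ring
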